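/- With the notation of the entropic (c,ε)-transform, if u ∈ L_exp^ε(ρ₁) and λ_u := ε log ∫ e^{u/ε} dρ₁, then u^{(c,ε)} ∈ L_exp^ε(ρ₂) and |λ_{u^{(c,ε)}} + λ_u| ≤ ‖c‖_∞. -/

import Mathlib

open MeasureTheory Real

noncomputable section

/-- The entropic `(c,ε)`-transform of `u`. -/
def transform {X Y : Type*} [MeasurableSpace X] (ρ₁ : Measure X)
    (c : X → Y → ℝ) (ε : ℝ) (u : X → ℝ) : Y → ℝ :=
  fun y => -ε * Real.log (∫ x, Real.exp ((u x - c x y) / ε) ∂ρ₁)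

theorem transform_mem_Lexp_and_lambda_bound
    {X Y : Type*}
    [MeasurableSpace X] [TopologicalSpace X] [PolishSpace X] [BorelSpace X]
    [MeasurableSpace Y] [TopologicalSpace Y] [PolishSpace Y] [BorelSpace Y]
    (ρ₁ : Measure X) [IsProbabilityMeasure ρ₁]
    (ρ₂ : Measure Y) [IsProbabilityMeasure ρ₂]
    (ε : ℝ) (hε : 0 < ε)
    (c : X → Y → ℝ) (hc : Measurable (Function.uncurry c))
    (M : ℝ) (hM : ∀ x y, |c x y| ≤ M)
    (u : X → ℝ) (hu : Measurable u)
    (hint : Integrable (fun x => Real.exp (u x / ε)) ρ₁)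
    (hpos : 0 < ∫ x, Real.exp (u x / ε) ∂ρ₁) :
    Integrable (fun y => Real.exp (transform ρ₁ c ε u y / ε)) ρ₂ ∧
    0 < ∫ y, Real.exp (transform ρ₁ c ε u y / ε) ∂ρ₂ ∧
    |ε * Real.log (∫ y, Real.exp (transform ρ₁ c ε u y / ε) ∂ρ₂)
        + ε * Real.log (∫ x, Real.exp (u x / ε) ∂ρ₁)| ≤ M := by
  set A := ∫ x, Real.exp (u x / ε) ∂ρ₁ with hA
  set g : Y → ℝ := fun y => ∫ x, Real.exp ((u x - c x y) / ε) ∂ρ₁ with hg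
  -- measurability of inner integrand jointly
  have hmeas : Measurable (fun p : Y × X => Real.exp ((u p.2 - c p.2 p.1) / ε)) := by
    apply Measurable.exp
    apply Measurable.div_const
    exact (hu.comp measurable_snd).sub (hc.comp (measurable_snd.prodMk measurable_fst))
  have hgmeas : StronglyMeasurable g := by
    exact (hmeas.stronglyMeasurable).integral_prod_right'
  -- per-y integrability and bounds
  have hcy : ∀ y, Measurable (fun x => Real.exp ((u x - c x y) / ε)) := fun y =>
    ((hu.sub (hc.comp (measurable_id.prodMk measurable_const))).div_const ε).exp
  have hbound : ∀ y x, Real.exp ((u x - c x y) / ε) ≤ Real.exp (M / ε) * Real.exp (u x / ε) := by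
    intro y x
    rw [← Real.exp_add, Real.exp_le_exp]
    have := (abs_le.1 (hM x y)).1
    rw [← add_div]
    apply div_le_div_of_nonneg_right _ hε.le
    linarith
  have hlbound : ∀ y x, Real.exp (-M / ε) * Real.exp (u x / ε) ≤ Real.exp ((u x - c x y) / ε) := by
    intro y x
    rw [← Real.exp_add, Real.exp_le_exp]
    have := (abs_le.1 (hM x y)).2
    rw [← add_div]
    apply div_le_div_of_nonneg_right _ hε.le
    linarith
  have hintc : ∀ y, Integrable (fun x => Real.exp ((u x - c x y) / ε)) ρ₁ := by
    intro y
    apply Integrable.mono' (hint.const_mul (Real.exp (M / ε))) (hcy y).aestronglyMeasurable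
    filter_upwards with x
    rw [Real.norm_eq_abs, abs_of_nonneg (Real.exp_nonneg _)]
    exact hbound y x
  have hgub : ∀ y, g y ≤ Real.exp (M / ε) * A := by
    intro y
    rw [hg, hA, ← integral_const_mul]
    exact integral_mono (hintc y) (hint.const_mul _) (fun x => hbound y x)
  have hglb : ∀ y, Real.exp (-M / ε) * A ≤ g y := by
    intro y
    rw [hg, hA, ← integral_const_mul]
    exact integral_mono (hint.const_mul _) (hintc y) (fun x => hlbound y x)
  have hgpos : ∀ y, 0 < g y := fun y =>
    lt_of_lt_of_le (mul_pos (Real.exp_pos _) hpos) (hglb y)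
  -- exp(transform/ε) = (g y)⁻¹
  have hkey : ∀ y, Real.exp (transform ρ₁ c ε u y / ε) = (g y)⁻¹ := by
    intro y
    have : transform ρ₁ c ε u y / ε = -Real.log (g y) := by
      simp only [transform, hg]
      field_simp
    rw [this, Real.exp_neg, Real.exp_log (hgpos y)]
  have hinvub : ∀ y, (g y)⁻¹ ≤ (Real.exp (-M / ε) * A)⁻¹ := fun y =>
    inv_anti₀ (mul_pos (Real.exp_pos _) hpos) (hglb y)
  have hinvlb : ∀ y, (Real.exp (M / ε) * A)⁻¹ ≤ (g y)⁻¹ := fun y =>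
    inv_anti₀ (hgpos y) (hgub y)
  have hginv_meas : AEStronglyMeasurable (fun y => (g y)⁻¹) ρ₂ :=
    (hgmeas.measurable.inv).aestronglyMeasurable
  have hint2 : Integrable (fun y => Real.exp (transform ρ₁ c ε u y / ε)) ρ₂ := by
    simp only [hkey]
    apply Integrable.mono' (integrable_const ((Real.exp (-M / ε) * A)⁻¹)) hginv_meas
    filter_upwards with y
    rw [Real.norm_eq_abs, abs_of_nonneg (inv_nonneg.2 (hgpos y).le)]
    exact hinvub y
  set B := ∫ y, Real.exp (transform ρ₁ c ε u y / ε) ∂ρ₂ with hB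
  have hBeq : B = ∫ y, (g y)⁻¹ ∂ρ₂ := by
    rw [hB]; exact integral_congr_ae (Filter.Eventually.of_forall hkey)
  have hint2' : Integrable (fun y => (g y)⁻¹) ρ₂ := by
    rw [show (fun y => (g y)⁻¹) = fun y => Real.exp (transform ρ₁ c ε u y / ε) by
      funext y; rw [hkey]]
    exact hint2
  have hBub : B ≤ (Real.exp (-M / ε) * A)⁻¹ := by
    rw [hBeq]
    calc ∫ y, (g y)⁻¹ ∂ρ₂ ≤ ∫ _, (Real.exp (-M / ε) * A)⁻¹ ∂ρ₂ :=
          integral_mono hint2' (integrable_const _) hinvub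
      _ = (Real.exp (-M / ε) * A)⁻¹ := by simp
  have hBlb : (Real.exp (M / ε) * A)⁻¹ ≤ B := by
    rw [hBeq]
    calc (Real.exp (M / ε) * A)⁻¹ = ∫ _, (Real.exp (M / ε) * A)⁻¹ ∂ρ₂ := by simp
      _ ≤ ∫ y, (g y)⁻¹ ∂ρ₂ := integral_mono (integrable_const _) hint2' hinvlb
  have hBpos : 0 < B := lt_of_lt_of_le (inv_pos.2 (mul_pos (Real.exp_pos _) hpos)) hBlb
  refine ⟨hint2, hBpos, ?_⟩
  have hsum : ε * Real.log B + ε * Real.log A = ε * Real.log (B * A) := by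
    rw [Real.log_mul hBpos.ne' hpos.ne', mul_add]
  rw [hsum]
  have h1 : B * A ≤ Real.exp (M / ε) := by
    calc B * A ≤ (Real.exp (-M / ε) * A)⁻¹ * A :=
          mul_le_mul_of_nonneg_right hBub hpos.le
      _ = (Real.exp (-M / ε))⁻¹ := by
          rw [mul_inv, mul_assoc, inv_mul_cancel₀ hpos.ne', mul_one]
      _ = Real.exp (M / ε) := by rw [neg_div, Real.exp_neg, inv_inv]
  have h2 : Real.exp (-M / ε) ≤ B * A := by
    calc Real.exp (-M / ε) = (Real.exp (M / ε) * A)⁻¹ * A := by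
          rw [mul_inv, mul_assoc, inv_mul_cancel₀ hpos.ne', mul_one, ← Real.exp_neg, neg_div]
      _ ≤ B * A := mul_le_mul_of_nonneg_right hBlb hpos.le
  have hlog1 : Real.log (B * A) ≤ M / ε := by
    have := Real.log_le_log (mul_pos hBpos hpos) h1
    rwa [Real.log_exp] at this
  have hlog2 : -(M / ε) ≤ Real.log (B * A) := by
    have := Real.log_le_log (Real.exp_pos _) h2
    rwa [Real.log_exp, neg_div] at this
  rw [abs_le]
  constructor
  · have : ε * (-(M / ε)) ≤ ε * Real.log (B * A) :=
      mul_le_mul_of_nonneg_left hlog2 hε.le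
    calc -M = ε * (-(M / ε)) := by field_simp
      _ ≤ _ := this
  · calc ε * Real.log (B * A) ≤ ε * (M / ε) := mul_le_mul_of_nonneg_left hlog1 hε.le
      _ = M := by field_simp
end
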